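/- Let L be a (1,0)-form and let R₁,…,R_b be pairwise non-proportional (0,1)-forms in R = k[x₀,x₁,y₀,y₁], and let n₁,…,n_b be positive integers. If F ∈ R is bihomogeneous of bidegree (c,d), F ∈ (L,R_p)^{n_p} for every p = 1,…,b, and d < n₁ + n₂ + ⋯ + n_b, then L divides F. -/

import Mathlib

open MvPolynomial

/-- `F` is bihomogeneous of bidegree `(c, d)` in `k[x₀,x₁,y₀,y₁]`, where the variables are
indexed by `Fin 4` with `x₀ = X 0`, `x₁ = X 1`, `y₀ = X 2`, `y₁ = X 3`. -/
def IsBihom {k : Type*} [CommSemiring k] (c d : ℕ) (F : MvPolynomial (Fin 4) k) : Prop :=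
  ∀ s ∈ F.support, s 0 + s 1 = c ∧ s 2 + s 3 = d

/-- Two polynomials are non-proportional: neither is a scalar multiple of the other. -/
def NonPropPoly {k : Type*} [CommSemiring k] (F G : MvPolynomial (Fin 4) k) : Prop :=
  (∀ c : k, F ≠ c • G) ∧ (∀ c : k, G ≠ c • F)

namespace BezoutAuxiliary

open Finset

section CommRingPart

variable {K : Type*} [CommRing K]

lemma single_ne01 : (Finsupp.single (0:Fin 4) 1) ≠ Finsupp.single (1:Fin 4) 1 := by
  intro hh
  have := DFunLike.congr_fun hh 0
  simp [Finsupp.single_apply] at this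

lemma single_ne23 : (Finsupp.single (2:Fin 4) 1) ≠ Finsupp.single (3:Fin 4) 1 := by
  intro hh
  have := DFunLike.congr_fun hh 2
  simp [Finsupp.single_apply] at this

lemma C_mul_X_eq4 (i : Fin 4) (a : K) :
    C a * (X i : MvPolynomial (Fin 4) K) = monomial (Finsupp.single i 1) a := by
  rw [X, C_mul_monomial, mul_one]

lemma C_mul_X_eq2 (i : Fin 2) (a : K) :
    C a * (X i : MvPolynomial (Fin 2) K) = monomial (Finsupp.single i 1) a := by
  rw [X, C_mul_monomial, mul_one]

lemma rep_x {L : MvPolynomial (Fin 4) K} (h : IsBihom 1 0 L) :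
    L = C (coeff (Finsupp.single 0 1) L) * X 0 + C (coeff (Finsupp.single 1 1) L) * X 1 := by
  ext s
  rw [coeff_add, C_mul_X_eq4, C_mul_X_eq4, coeff_monomial, coeff_monomial]
  by_cases h0 : Finsupp.single (0:Fin 4) 1 = s
  · subst h0
    rw [if_pos rfl, if_neg (fun hh => single_ne01 hh.symm), add_zero]
  · by_cases h1 : Finsupp.single (1:Fin 4) 1 = s
    · subst h1
      rw [if_neg h0, if_pos rfl, zero_add]
    · rw [if_neg h0, if_neg h1, add_zero]
      by_contra hc
      obtain ⟨hx, hy⟩ := h s (mem_support_iff.mpr hc)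
      rcases (by omega : s 0 = 1 ∧ s 1 = 0 ∨ s 0 = 0 ∧ s 1 = 1) with ⟨e0, e1⟩ | ⟨e0, e1⟩
      · exact h0 (Finsupp.ext fun i => by fin_cases i <;> simp [Finsupp.single_apply] <;> omega).symm
      · exact h1 (Finsupp.ext fun i => by fin_cases i <;> simp [Finsupp.single_apply] <;> omega).symm

lemma rep_y {L : MvPolynomial (Fin 4) K} (h : IsBihom 0 1 L) :
    L = C (coeff (Finsupp.single 2 1) L) * X 2 + C (coeff (Finsupp.single 3 1) L) * X 3 := by
  ext s
  rw [coeff_add, C_mul_X_eq4, C_mul_X_eq4, coeff_monomial, coeff_monomial]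
  by_cases h0 : Finsupp.single (2:Fin 4) 1 = s
  · subst h0
    rw [if_pos rfl, if_neg (fun hh => single_ne23 hh.symm), add_zero]
  · by_cases h1 : Finsupp.single (3:Fin 4) 1 = s
    · subst h1
      rw [if_neg h0, if_pos rfl, zero_add]
    · rw [if_neg h0, if_neg h1, add_zero]
      by_contra hc
      obtain ⟨hx, hy⟩ := h s (mem_support_iff.mpr hc)
      rcases (by omega : s 2 = 1 ∧ s 3 = 0 ∨ s 2 = 0 ∧ s 3 = 1) with ⟨e0, e1⟩ | ⟨e0, e1⟩
      · exact h0 (Finsupp.ext fun i => by fin_cases i <;> simp [Finsupp.single_apply] <;> omega).symm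
      · exact h1 (Finsupp.ext fun i => by fin_cases i <;> simp [Finsupp.single_apply] <;> omega).symm

lemma coeff_lin2_left (α β : K) :
    coeff (Finsupp.single 0 1) (C α * X 0 + C β * X 1 : MvPolynomial (Fin 2) K) = α := by
  rw [coeff_add, C_mul_X_eq2, C_mul_X_eq2, coeff_monomial, coeff_monomial, if_pos rfl, if_neg,
    add_zero]
  intro hh
  have := DFunLike.congr_fun hh 0
  simp [Finsupp.single_apply] at this

lemma coeff_lin2_right (α β : K) :
    coeff (Finsupp.single 1 1) (C α * X 0 + C β * X 1 : MvPolynomial (Fin 2) K) = β := by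
  rw [coeff_add, C_mul_X_eq2, C_mul_X_eq2, coeff_monomial, coeff_monomial, if_pos rfl, if_neg,
    zero_add]
  intro hh
  have := DFunLike.congr_fun hh 0
  simp [Finsupp.single_apply] at this

variable {σ : Type*}

lemma hom_mul_expand (P t : MvPolynomial σ K) {m nn : ℕ} (hP : P.IsHomogeneous m)
    (hQ : (P * t).IsHomogeneous nn) :
    P * t = ∑ i ∈ range (t.totalDegree + 1),
      (if m + i = nn then P * homogeneousComponent i t else 0) := by
  conv_lhs => rw [show P * t = homogeneousComponent nn (P * t) by
    rw [homogeneousComponent_of_mem ((mem_homogeneousSubmodule _ _).2 hQ), if_pos rfl]]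
  conv_lhs => rw [show P * t = ∑ i ∈ range (t.totalDegree + 1), P * homogeneousComponent i t by
    rw [← Finset.mul_sum, sum_homogeneousComponent]]
  rw [map_sum]
  refine Finset.sum_congr rfl fun i _ => ?_
  have hhom : (P * homogeneousComponent i t).IsHomogeneous (m + i) :=
    hP.mul (homogeneousComponent_isHomogeneous i t)
  rw [homogeneousComponent_of_mem ((mem_homogeneousSubmodule _ _).2 hhom)]
  by_cases hmi : m + i = nn
  · rw [if_pos hmi.symm, if_pos hmi]
  · rw [if_neg (fun hh => hmi hh.symm), if_neg hmi]

lemma eq_zero_of_hom_dvd {P Q : MvPolynomial σ K} {m nn : ℕ}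
    (hP : P.IsHomogeneous m) (hQ : Q.IsHomogeneous nn) (hmn : nn < m) (h : P ∣ Q) :
    Q = 0 := by
  obtain ⟨t, rfl⟩ := h
  rw [hom_mul_expand P t hP hQ]
  refine Finset.sum_eq_zero fun i _ => ?_
  rw [if_neg (by omega)]

lemma exists_C_mul_of_hom_dvd {P Q : MvPolynomial σ K} {m : ℕ}
    (hP : P.IsHomogeneous m) (hQ : Q.IsHomogeneous m) (h : P ∣ Q) :
    ∃ e : K, Q = C e * P := by
  obtain ⟨t, rfl⟩ := h
  refine ⟨coeff 0 t, ?_⟩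
  rw [hom_mul_expand P t hP hQ]
  rw [Finset.sum_eq_single_of_mem 0 (Finset.mem_range.2 (by omega))]
  · rw [if_pos (by omega), homogeneousComponent_zero, mul_comm]
  · intro i _ hi
    rw [if_neg (by omega)]

end CommRingPart

lemma prod_pow_dvd {M : Type*} [CommMonoidWithZero M] [IsCancelMulZero M] {ι : Type*} [DecidableEq ι]
    (s : Finset ι) (r : ι → M) (n : ι → ℕ) (F : M)
    (hp : ∀ i ∈ s, Prime (r i))
    (hnd : ∀ i ∈ s, ∀ j ∈ s, i ≠ j → ¬ r i ∣ r j)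
    (h : ∀ i ∈ s, r i ^ n i ∣ F) : (∏ i ∈ s, r i ^ n i) ∣ F := by
  revert hp hnd h
  induction s using Finset.induction_on with
  | empty => intro _ _ _; simpa using one_dvd F
  | @insert a s' ha ih =>
    intro hp hnd h
    obtain ⟨G, hG⟩ := ih (fun i hi => hp i (mem_insert_of_mem hi))
      (fun i hi j hj hij => hnd i (mem_insert_of_mem hi) j (mem_insert_of_mem hj) hij)
      (fun i hi => h i (mem_insert_of_mem hi))
    have hpa : Prime (r a) := hp a (mem_insert_self a s')
    have hnda : ¬ r a ∣ ∏ i ∈ s', r i ^ n i := by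
      intro hdvd
      obtain ⟨i, hi, hdi⟩ := (hpa.dvd_finset_prod_iff _).1 hdvd
      exact hnd a (mem_insert_self a s') i (mem_insert_of_mem hi)
        (fun he => ha (he ▸ hi)) (hpa.dvd_of_dvd_pow hdi)
    have hra : r a ^ n a ∣ (∏ i ∈ s', r i ^ n i) * G := hG ▸ h a (mem_insert_self a s')
    obtain ⟨H, hH⟩ := hpa.pow_dvd_of_dvd_mul_left (n a) hnda hra
    refine ⟨H, ?_⟩
    rw [Finset.prod_insert ha, hG, hH]
    exact (mul_left_comm _ _ _).trans (mul_assoc _ _ _).symm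

section FieldPart

variable {k : Type*} [Field k]

lemma prime_X0_fin2 : Prime (X 0 : MvPolynomial (Fin 2) k) := by
  rw [← MulEquiv.prime_iff (finSuccEquiv k 1).toMulEquiv]
  have : (finSuccEquiv k 1).toMulEquiv (X 0) = Polynomial.X := by
    show finSuccEquiv k 1 (X 0) = Polynomial.X
    exact finSuccEquiv_X_zero
  rw [this]
  exact Polynomial.prime_X

lemma prime_lin2 {α β : k} (h : ¬ (α = 0 ∧ β = 0)) :
    Prime (C α * X 0 + C β * X 1 : MvPolynomial (Fin 2) k) := by
  by_cases hα : α = 0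
  · have hβ : β ≠ 0 := fun hb => h ⟨hα, hb⟩
    subst hα
    simp only [map_zero, zero_mul, zero_add]
    have : Associated (X 1 : MvPolynomial (Fin 2) k) (C β * X 1) := by
      refine Associated.symm ⟨?_, ?_⟩
      · exact (IsUnit.of_mul_eq_one (a := C β⁻¹) (C β)
          (by rw [← map_mul, inv_mul_cancel₀ hβ, map_one])).unit
      · show C β * X 1 * C β⁻¹ = X 1
        rw [mul_comm, ← mul_assoc, ← map_mul, inv_mul_cancel₀ hβ, map_one, one_mul]
    have hp : Prime (X 1 : MvPolynomial (Fin 2) k) := by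
      let e : MvPolynomial (Fin 2) k ≃ₐ[k] MvPolynomial (Fin 2) k :=
        renameEquiv k (Equiv.swap 0 1)
      rw [show (X 1 : MvPolynomial (Fin 2) k) = e (X 0) by simp [e]]
      exact (MulEquiv.prime_iff e.toMulEquiv).mpr prime_X0_fin2
    exact this.prime hp
  · have h1 : (C α⁻¹ : MvPolynomial (Fin 2) k) * C α = 1 := by
      rw [← map_mul, inv_mul_cancel₀ hα, map_one]
    let f : MvPolynomial (Fin 2) k →ₐ[k] MvPolynomial (Fin 2) k :=
      aeval ![C α * X 0 + C β * X 1, X 1]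
    let g : MvPolynomial (Fin 2) k →ₐ[k] MvPolynomial (Fin 2) k :=
      aeval ![C α⁻¹ * (X 0 - C β * X 1), X 1]
    have hf0 : f (X 0) = C α * X 0 + C β * X 1 := by simp [f]
    have hf1 : f (X 1) = X 1 := by simp [f]
    have hg0 : g (X 0) = C α⁻¹ * (X 0 - C β * X 1) := by simp [g]
    have hg1 : g (X 1) = X 1 := by simp [g]
    have hfg : f.comp g = AlgHom.id k _ := by
      apply MvPolynomial.algHom_ext
      rw [Fin.forall_fin_two]
      constructor
      · rw [AlgHom.comp_apply, AlgHom.id_apply, hg0, map_mul, map_sub, map_mul, hf0, hf1]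
        rw [show (f (C α⁻¹) : MvPolynomial (Fin 2) k) = C α⁻¹ from aeval_C _ _,
            show (f (C β) : MvPolynomial (Fin 2) k) = C β from aeval_C _ _]
        linear_combination (X 0 : MvPolynomial (Fin 2) k) * h1
      · rw [AlgHom.comp_apply, AlgHom.id_apply, hg1, hf1]
    have hgf : g.comp f = AlgHom.id k _ := by
      apply MvPolynomial.algHom_ext
      rw [Fin.forall_fin_two]
      constructor
      · rw [AlgHom.comp_apply, AlgHom.id_apply, hf0, map_add, map_mul, map_mul, hg0, hg1]
        rw [show (g (C α) : MvPolynomial (Fin 2) k) = C α from aeval_C _ _,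
            show (g (C β) : MvPolynomial (Fin 2) k) = C β from aeval_C _ _]
        linear_combination ((X 0 : MvPolynomial (Fin 2) k) - C β * X 1) * h1
      · rw [AlgHom.comp_apply, AlgHom.id_apply, hf1, hg1]
    let e : MvPolynomial (Fin 2) k ≃ₐ[k] MvPolynomial (Fin 2) k :=
      AlgEquiv.ofAlgHom f g hfg hgf
    rw [show (C α * X 0 + C β * X 1 : MvPolynomial (Fin 2) k) = e (X 0) from hf0.symm]
    exact (MulEquiv.prime_iff e.toMulEquiv).mpr prime_X0_fin2

lemma eval_finSuccEquiv (r : MvPolynomial (Fin 3) k) (G : MvPolynomial (Fin 4) k) :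
    Polynomial.eval r (finSuccEquiv k 3 G) = aeval ![r, X 0, X 1, X 2] G := by
  have h : (Polynomial.evalRingHom r).comp
        ((finSuccEquiv k 3 : MvPolynomial (Fin 4) k ≃ₐ[k] _) :
          MvPolynomial (Fin 4) k →+* Polynomial (MvPolynomial (Fin 3) k))
      = ((aeval ![r, X 0, X 1, X 2] :
          MvPolynomial (Fin 4) k →ₐ[k] MvPolynomial (Fin 3) k) :
          MvPolynomial (Fin 4) k →+* MvPolynomial (Fin 3) k) := by
    apply MvPolynomial.ringHom_ext
    · intro a
      simp [finSuccEquiv_apply]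
    · intro i
      refine Fin.cases ?_ (fun j => ?_) i
      · simp [finSuccEquiv_X_zero]
      · rw [RingHom.comp_apply]
        simp only [RingHom.coe_coe, finSuccEquiv_X_succ, Polynomial.coe_evalRingHom,
          Polynomial.eval_C]
        rw [aeval_X, Matrix.cons_val_succ]
        fin_cases j <;> simp
  exact RingHom.congr_fun h G

lemma aeval_scale {c : ℕ} {F : MvPolynomial (Fin 4) k}
    (hF : ∀ s ∈ F.support, s 0 + s 1 = c) (q₀ q₁ : k) :
    (aeval ![C q₀ * X 0, C q₁ * X 0, X 1, X 2] F : MvPolynomial (Fin 3) k)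
      = X 0 ^ c * rename Fin.succ (aeval ![C q₀, C q₁, X 0, X 1] F : MvPolynomial (Fin 2) k) := by
  conv_lhs => rw [F.as_sum]
  conv_rhs => rw [F.as_sum]
  rw [map_sum, map_sum, map_sum, Finset.mul_sum]
  refine Finset.sum_congr rfl fun s hs => ?_
  have hc := hF s hs
  rw [aeval_monomial, aeval_monomial, Finsupp.prod_pow, Finsupp.prod_pow,
    Fin.prod_univ_four, Fin.prod_univ_four]
  simp only [Matrix.cons_val_zero, Matrix.cons_val_one, Matrix.head_cons,
    Matrix.cons_val_two, Matrix.cons_val_three, Matrix.tail_cons, Matrix.head_fin_const]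
  rw [map_mul, map_mul, map_mul, map_mul, map_pow, map_pow, map_pow, map_pow,
    rename_X, rename_X]
  rw [show ((rename Fin.succ) (algebraMap k (MvPolynomial (Fin 2) k) (coeff s F))
      : MvPolynomial (Fin 3) k) = algebraMap k _ (coeff s F) from (rename Fin.succ).commutes _]
  rw [show ((rename Fin.succ) (C q₀ : MvPolynomial (Fin 2) k) : MvPolynomial (Fin 3) k)
      = C q₀ from rename_C _ _]
  rw [show ((rename Fin.succ) (C q₁ : MvPolynomial (Fin 2) k) : MvPolynomial (Fin 3) k)
      = C q₁ from rename_C _ _]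
  rw [Fin.succ_zero_eq_one, Fin.succ_one_eq_two]
  have key : (X 0 : MvPolynomial (Fin 3) k) ^ s 0 * X 0 ^ s 1 = X 0 ^ c := by
    rw [← pow_add, hc]
  linear_combination (algebraMap k (MvPolynomial (Fin 3) k) (coeff s F)
      * C q₀ ^ s 0 * C q₁ ^ s 1 * X 1 ^ s 2 * X 2 ^ s 3) * key

lemma dvd_of_eval_zero {c : ℕ} {F : MvPolynomial (Fin 4) k}
    (hF : ∀ s ∈ F.support, s 0 + s 1 = c) (r : k)
    (h0 : aeval ![C r, C 1, X 0, X 1] F = (0 : MvPolynomial (Fin 2) k)) :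
    (X 0 - C r * X 1 : MvPolynomial (Fin 4) k) ∣ F := by
  have hvec : ![(C r * X 0 : MvPolynomial (Fin 3) k), X 0, X 1, X 2]
      = ![C r * X 0, C 1 * X 0, X 1, X 2] := by
    funext i; fin_cases i <;> simp
  have heval : Polynomial.eval (C r * X 0 : MvPolynomial (Fin 3) k) (finSuccEquiv k 3 F) = 0 := by
    rw [eval_finSuccEquiv, hvec, aeval_scale hF r 1, h0, map_zero, mul_zero]
  have hdvd2 : (Polynomial.X - Polynomial.C (C r * X 0 : MvPolynomial (Fin 3) k))
      ∣ finSuccEquiv k 3 F := Polynomial.dvd_iff_isRoot.mpr heval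
  have heL : finSuccEquiv k 3 (X 0 - C r * X 1)
      = Polynomial.X - Polynomial.C (C r * X 0 : MvPolynomial (Fin 3) k) := by
    rw [map_sub, map_mul, finSuccEquiv_X_zero, ← Fin.succ_zero_eq_one, finSuccEquiv_X_succ]
    rw [show (finSuccEquiv k 3 (C r)) = Polynomial.C (C r) by simp [finSuccEquiv_apply], ← map_mul]
  rw [← heL] at hdvd2
  have := map_dvd (finSuccEquiv k 3).symm hdvd2
  simpa using this

lemma aeval_vanish {b : ℕ} (L : MvPolynomial (Fin 4) k)
    (R : Fin b → MvPolynomial (Fin 4) k)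
    (hR0 : ∀ p, R p ≠ 0) (hRdeg : ∀ p, IsBihom 0 1 (R p))
    (hRnp : ∀ p q, p ≠ q → NonPropPoly (R p) (R q))
    (n : Fin b → ℕ)
    (c d : ℕ) (F : MvPolynomial (Fin 4) k) (hF : IsBihom c d F)
    (hmem : ∀ p, F ∈ (Ideal.span {L, R p}) ^ n p)
    (hd : d < ∑ p, n p)
    (q₀ q₁ : k) (hq : aeval ![C q₀, C q₁, X 0, X 1] L = (0 : MvPolynomial (Fin 2) k)) :
    aeval ![C q₀, C q₁, X 0, X 1] F = (0 : MvPolynomial (Fin 2) k) := by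
  classical
  set ψ : MvPolynomial (Fin 4) k →ₐ[k] MvPolynomial (Fin 2) k :=
    aeval ![C q₀, C q₁, X 0, X 1] with hψ
  set α : Fin b → k := fun p => coeff (Finsupp.single 2 1) (R p) with hα
  set β : Fin b → k := fun p => coeff (Finsupp.single 3 1) (R p) with hβ
  have hrep : ∀ p, R p = C (α p) * X 2 + C (β p) * X 3 := fun p => rep_y (hRdeg p)
  set r : Fin b → MvPolynomial (Fin 2) k := fun p => C (α p) * X 0 + C (β p) * X 1 with hr
  have hψR : ∀ p, ψ (R p) = r p := by
    intro p
    conv_lhs => rw [hrep p]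
    rw [map_add, map_mul, map_mul]
    simp [hψ]
    rfl
  have hαβ : ∀ p, ¬ (α p = 0 ∧ β p = 0) := by
    rintro p ⟨h1, h2⟩
    apply hR0 p
    rw [hrep p, h1, h2]
    simp
  have hprime : ∀ p, Prime (r p) := fun p => prime_lin2 (hαβ p)
  have hhom_r : ∀ p, (r p).IsHomogeneous 1 := fun p =>
    (isHomogeneous_C_mul_X _ _).add (isHomogeneous_C_mul_X _ _)
  have hdvd : ∀ p, r p ^ n p ∣ ψ F := by
    intro p
    have h1 : ψ F ∈ Ideal.map ψ ((Ideal.span {L, R p}) ^ n p) :=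
      Ideal.mem_map_of_mem ψ (hmem p)
    rw [Ideal.map_pow, Ideal.map_span] at h1
    have himg : (⇑ψ '' {L, R p} : Set (MvPolynomial (Fin 2) k)) = {0, r p} := by
      rw [Set.image_insert_eq, Set.image_singleton, hψR p,
        show ψ L = (0 : MvPolynomial (Fin 2) k) from hq]
    rw [himg] at h1
    have hle : Ideal.span ({0, r p} : Set (MvPolynomial (Fin 2) k)) ≤ Ideal.span {r p} := by
      rw [Ideal.span_le]
      rintro x (rfl | rfl)
      · exact Ideal.zero_mem _
      · exact Ideal.subset_span rfl
    have h2 : ψ F ∈ (Ideal.span {r p}) ^ n p := Ideal.pow_right_mono hle (n p) h1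
    rwa [Ideal.span_singleton_pow, Ideal.mem_span_singleton] at h2
  have hnd : ∀ p q', p ≠ q' → ¬ r p ∣ r q' := by
    intro p q' hpq hdvd'
    obtain ⟨e, he⟩ := exists_C_mul_of_hom_dvd (hhom_r p) (hhom_r q') hdvd'
    have h1 : α q' = e * α p := by
      have h2 := congrArg (coeff (Finsupp.single 0 1)) he
      rw [hr] at h2
      rw [coeff_lin2_left, coeff_C_mul] at h2
      rw [h2, coeff_lin2_left]
    have h2 : β q' = e * β p := by
      have h2 := congrArg (coeff (Finsupp.single 1 1)) he
      rw [hr] at h2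
      rw [coeff_lin2_right, coeff_C_mul] at h2
      rw [h2, coeff_lin2_right]
    apply (hRnp p q' hpq).2 e
    rw [hrep q', hrep p, h1, h2, smul_eq_C_mul, map_mul, map_mul]
    ring
  have hprod : (∏ p, r p ^ n p) ∣ ψ F :=
    prod_pow_dvd Finset.univ r n (ψ F) (fun p _ => hprime p)
      (fun p _ q' _ hpq => hnd p q' hpq) (fun p _ => hdvd p)
  have hhomP : (∏ p, r p ^ n p).IsHomogeneous (∑ p, n p) := by
    have := IsHomogeneous.prod Finset.univ (fun p => r p ^ n p) (fun p => 1 * n p)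
      (fun p _ => (hhom_r p).pow (n p))
    simpa using this
  have hhomF : (ψ F).IsHomogeneous d := by
    conv => rw [F.as_sum]
    rw [map_sum]
    apply IsHomogeneous.sum
    intro s hs
    obtain ⟨hx, hy⟩ := hF s hs
    have hterm : ψ (monomial s (coeff s F))
        = C (coeff s F * q₀ ^ s 0 * q₁ ^ s 1) * (X 0 ^ s 2 * X 1 ^ s 3) := by
      rw [hψ, aeval_monomial, Finsupp.prod_pow, Fin.prod_univ_four]
      simp only [Matrix.cons_val_zero, Matrix.cons_val_one, Matrix.head_cons,
        Matrix.cons_val_two, Matrix.cons_val_three, Matrix.tail_cons, Matrix.head_fin_const]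
      rw [map_mul, map_mul, map_pow, map_pow, algebraMap_eq]
      ring
    rw [hterm, ← hy]
    exact ((isHomogeneous_X_pow _ _).mul (isHomogeneous_X_pow _ _)).C_mul _
  exact eq_zero_of_hom_dvd hhomP hhomF hd hprod

end FieldPart

end BezoutAuxiliary

open BezoutAuxiliary

/-- **Bigraded Bezout with multiplicities against a `(1,0)`-line.**  Let `L` be a
`(1,0)`-form and `R₁, …, R_b` pairwise non-proportional `(0,1)`-forms, and let
`n₁, …, n_b` be positive integers.  If `F` is bihomogeneous of bidegree `(c, d)`,
`F ∈ (L, R_p)^(n_p)` for every `p`, and `d < n₁ + ⋯ + n_b`, then `L` divides `F`. -/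
theorem bezout_against_horizontal_line {k : Type*} [Field k] [IsAlgClosed k] [CharZero k]
    (b : ℕ) (L : MvPolynomial (Fin 4) k) (hL0 : L ≠ 0) (hLdeg : IsBihom 1 0 L)
    (R : Fin b → MvPolynomial (Fin 4) k)
    (hR0 : ∀ p, R p ≠ 0) (hRdeg : ∀ p, IsBihom 0 1 (R p))
    (hRnp : ∀ p q, p ≠ q → NonPropPoly (R p) (R q))
    (n : Fin b → ℕ) (hn : ∀ p, 1 ≤ n p)
    (c d : ℕ) (F : MvPolynomial (Fin 4) k) (hF : IsBihom c d F)
    (hmem : ∀ p, F ∈ (Ideal.span {L, R p}) ^ n p)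
    (hd : d < ∑ p, n p) :
    L ∣ F := by
  classical
  set a := coeff (Finsupp.single 0 1) L with ha_def
  set bb := coeff (Finsupp.single 1 1) L with hb_def
  have hLrep : L = C a * X 0 + C bb * X 1 := rep_x hLdeg
  by_cases ha : a = 0
  · -- here `bb ≠ 0`; swap the two `x`-variables
    have hb : bb ≠ 0 := by
      intro hb
      apply hL0
      rw [hLrep, ha, hb]
      simp
    have hq : aeval ![C 1, C (0:k), X 0, X 1] L = (0 : MvPolynomial (Fin 2) k) := by
      rw [hLrep, ha]
      simp
    have h0 := aeval_vanish L R hR0 hRdeg hRnp n c d F hF hmem hd 1 0 hq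
    set τ := Equiv.swap (0 : Fin 4) 1 with hτ
    have hF' : ∀ s ∈ (rename τ F).support, s 0 + s 1 = c := by
      intro s hs
      rw [support_rename_of_injective τ.injective] at hs
      obtain ⟨u, hu, rfl⟩ := Finset.mem_image.1 hs
      have e0 : Finsupp.mapDomain τ u 0 = u 1 := by
        rw [show (0 : Fin 4) = τ 1 by simp [hτ], Finsupp.mapDomain_apply τ.injective]
      have e1 : Finsupp.mapDomain τ u 1 = u 0 := by
        rw [show (1 : Fin 4) = τ 0 by simp [hτ], Finsupp.mapDomain_apply τ.injective]
      rw [e0, e1]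
      have := (hF u hu).1
      omega
    have h0' : aeval ![C (0:k), C 1, X 0, X 1] (rename τ F) = (0 : MvPolynomial (Fin 2) k) := by
      rw [aeval_rename]
      have hcomp : (![C (0:k), C 1, X 0, X 1] ∘ τ : Fin 4 → MvPolynomial (Fin 2) k)
          = ![C 1, C (0:k), X 0, X 1] := by
        funext i
        fin_cases i <;> simp [hτ, Equiv.swap_apply_def]
      rw [hcomp, h0]
    have hdvd := dvd_of_eval_zero hF' 0 h0'
    rw [map_zero, zero_mul, sub_zero] at hdvd
    have h3 := map_dvd (rename (σ := Fin 4) (R := k) τ.symm) hdvd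
    rw [rename_X, rename_rename, Equiv.symm_comp_self, rename_id, AlgHom.id_apply] at h3
    rw [show τ.symm 0 = 1 by simp [hτ]] at h3
    obtain ⟨G, hG⟩ := h3
    refine ⟨C bb⁻¹ * G, ?_⟩
    have hu : (C bb : MvPolynomial (Fin 4) k) * C bb⁻¹ = 1 := by
      rw [← map_mul, mul_inv_cancel₀ hb, map_one]
    rw [hLrep, ha, map_zero, zero_mul, zero_add, hG]
    linear_combination (-(X 1 : MvPolynomial (Fin 4) k) * G) * hu
  · -- here `a ≠ 0`
    set r := -(bb / a) with hr_def
    have har : a * r = -bb := by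
      rw [hr_def]
      field_simp
    have hq : aeval ![C r, C 1, X 0, X 1] L = (0 : MvPolynomial (Fin 2) k) := by
      rw [hLrep, map_add, map_mul, map_mul]
      simp only [aeval_C, aeval_X, Matrix.cons_val_zero, Matrix.cons_val_one, Matrix.head_cons,
        algebraMap_eq]
      rw [← map_mul, ← map_mul, mul_one, ← map_add, show a * r + bb = 0 by rw [har]; ring,
        map_zero]
    have h0 := aeval_vanish L R hR0 hRdeg hRnp n c d F hF hmem hd r 1 hq
    have hdvd := dvd_of_eval_zero (fun s hs => (hF s hs).1) r h0
    obtain ⟨G, hG⟩ := hdvd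
    refine ⟨C a⁻¹ * G, ?_⟩
    have hu : (C a : MvPolynomial (Fin 4) k) * C a⁻¹ = 1 := by
      rw [← map_mul, mul_inv_cancel₀ ha, map_one]
    have hfac : L = C a * (X 0 - C r * X 1) := by
      rw [hLrep]
      have hC : (C a : MvPolynomial (Fin 4) k) * C r = - C bb := by
        rw [← map_mul, har, map_neg]
      linear_combination (X 1 : MvPolynomial (Fin 4) k) * hC
    rw [hfac, hG]
    linear_combination (-((X 0 : MvPolynomial (Fin 4) k) - C r * X 1) * G) * hu
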